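/- Let p be a prime and α ∈ ℤ_p rational, i.e. there exist integers b, c with b not divisible by p and b·α = c in ℤ_p. Then there exist γ ∈ ℤ_p and an integer n such that: (i) there are integers d ≥ 1 and a with 0 ≤ a ≤ p^d − 1 and (p^d − 1)·γ = −a (so γ is rational with −1 ≤ γ ≤ 0); (ii) α = n + γ in ℤ_p; and (iii) the digit sequences of α and γ are eventually equal, i.e. there is N with α_i = γ_i for all i ≥ N. (Lemma 7.3.) -/
import Mathlib

open Finset

private lemma digit_sum_lt_pow {p D : ℕ} (hp : 1 ≤ p) (g : ℕ → ℕ) (hg : ∀ i, g i < p) :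
    ∑ j ∈ range D, g j * p ^ j < p ^ D := by
  induction D with
  | zero => simp
  | succ D ih =>
    rw [Finset.sum_range_succ]
    have h1 : g D * p ^ D ≤ (p - 1) * p ^ D :=
      Nat.mul_le_mul_right _ (by have := hg D; omega)
    have h2 : p ^ D + (p - 1) * p ^ D = p ^ (D + 1) := by
      have hp1 : 1 + (p - 1) = p := by omega
      calc p ^ D + (p - 1) * p ^ D = (1 + (p - 1)) * p ^ D := by ring
        _ = p ^ (D + 1) := by rw [hp1, pow_succ]; ring
    omega

private lemma digits_unique {p : ℕ} (hp : 1 < p) (e f : ℕ → ℕ)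
    (he : ∀ i, e i < p) (hf : ∀ i, f i < p)
    (h : ∀ k : ℕ, ((p : ℤ)) ^ k ∣ ∑ i ∈ range k, ((e i : ℤ) - (f i : ℤ)) * (p : ℤ) ^ i) :
    ∀ i, e i = f i := by
  intro i
  induction i using Nat.strong_induction_on with
  | _ i ih =>
    have h1 := h (i + 1)
    rw [Finset.sum_range_succ] at h1
    have h2 : ∑ j ∈ range i, ((e j : ℤ) - (f j : ℤ)) * (p : ℤ) ^ j = 0 := by
      apply Finset.sum_eq_zero; intro j hj
      rw [Finset.mem_range] at hj
      rw [ih j hj]; ring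
    rw [h2, zero_add] at h1
    have hppos : (0 : ℤ) < p := by exact_mod_cast Nat.lt_of_lt_of_le Nat.zero_lt_one hp.le
    have h3 : (p : ℤ) ∣ ((e i : ℤ) - (f i : ℤ)) := by
      obtain ⟨q, hq⟩ := h1
      refine ⟨q, mul_right_cancel₀ (pow_ne_zero i hppos.ne') ?_⟩
      rw [pow_succ] at hq
      linear_combination hq
    have h4 : |(e i : ℤ) - (f i : ℤ)| < p := by
      have := he i; have := hf i
      rw [abs_lt]; omega
    have h5 := Int.eq_zero_of_abs_lt_dvd h3 h4
    omega

private lemma padic_eq_zero_of_forall_dvd {p : ℕ} [hp : Fact p.Prime] (x : ℤ_[p])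
    (h : ∀ m : ℕ, ((p : ℤ_[p])) ^ m ∣ x) : x = 0 := by
  by_contra hx
  obtain ⟨k, hk⟩ := PadicInt.exists_pow_neg_lt p (norm_pos_iff.mpr hx)
  have : ‖x‖ ≤ (p : ℝ) ^ (-(k : ℤ)) := by
    rw [PadicInt.norm_le_pow_iff_mem_span_pow]
    exact Ideal.mem_span_singleton.mpr (h k)
  linarith

private lemma partial_sum_dvd {p : ℕ} [Fact p.Prime] (g : ℕ → ℤ_[p]) {m k : ℕ} (hmk : m ≤ k) :
    ((p : ℤ_[p])) ^ m ∣ (∑ i ∈ range k, g i * (p : ℤ_[p]) ^ i)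
      - ∑ i ∈ range m, g i * (p : ℤ_[p]) ^ i := by
  obtain ⟨j, rfl⟩ := Nat.exists_eq_add_of_le hmk
  rw [Finset.sum_range_add, add_sub_cancel_left]
  apply Finset.dvd_sum
  intro l _
  rw [pow_add]
  exact Dvd.dvd.mul_left (dvd_mul_right _ _) _
open Finset

private lemma dig_eventually_periodic (p : ℕ) [hp : Fact p.Prime] (α : ℤ_[p])
    (dig : ℕ → ℕ) (hdig_lt : ∀ i, dig i < p)
    (hdig : ∀ n : ℕ, ((p : ℤ_[p]) ^ n) ∣
      (α - ∑ i ∈ Finset.range n, (dig i : ℤ_[p]) * (p : ℤ_[p]) ^ i))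
    (b c : ℤ) (hb : ¬ ((p : ℤ) ∣ b)) (hbc : (b : ℤ_[p]) * α = (c : ℤ_[p])) :
    ∃ N D : ℕ, 1 ≤ D ∧ ∀ i, N ≤ i → dig (i + D) = dig i := by
  have hp1 : 1 < p := hp.out.one_lt
  have hppos : (0 : ℤ) < p := by exact_mod_cast hp.out.pos
  set Sz : ℕ → ℤ := fun m => ∑ i ∈ range m, (dig i : ℤ) * (p : ℤ) ^ i with hSzdef
  have hSzcast : ∀ m, ((Sz m : ℤ_[p])) = ∑ i ∈ range m, (dig i : ℤ_[p]) * (p : ℤ_[p]) ^ i := by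
    intro m; simp only [hSzdef]; push_cast; rfl
  have hdvdZ : ∀ m, (p : ℤ) ^ m ∣ (c - b * Sz m) := by
    intro m
    have h1 : ((p : ℤ_[p])) ^ m ∣ ((c - b * Sz m : ℤ) : ℤ_[p]) := by
      push_cast
      rw [hSzcast m, ← hbc]
      have h2 := (hdig m).mul_left (b : ℤ_[p])
      convert h2 using 1; ring
    have h3 := (PadicInt.pow_p_dvd_int_iff m (c - b * Sz m)).mp h1
    exact_mod_cast h3
  set t : ℕ → ℤ := fun m => (c - b * Sz m) / (p : ℤ) ^ m with htdef
  have ht : ∀ m, (p : ℤ) ^ m * t m = c - b * Sz m := fun m => Int.mul_ediv_cancel' (hdvdZ m)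
  have hrec : ∀ m, (p : ℤ) * t (m + 1) = t m - b * dig m := by
    intro m
    have h1 := ht (m + 1)
    have h2 := ht m
    have h3 : Sz (m + 1) = Sz m + (dig m : ℤ) * (p : ℤ) ^ m := by
      simp [hSzdef, Finset.sum_range_succ]
    apply mul_left_cancel₀ (pow_ne_zero m hppos.ne')
    rw [pow_succ] at h1
    linear_combination h1 - h2 - b * h3
  set B : ℤ := max |c| |b| with hBdef
  have hBb : |b| ≤ B := le_max_right _ _
  have hBpos : 0 ≤ B := le_trans (abs_nonneg c) (le_max_left _ _)
  have hB : ∀ m, |t m| ≤ B := by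
    intro m
    induction m with
    | zero =>
      have h0 := ht 0
      simp [hSzdef] at h0
      rw [h0]; exact le_max_left _ _
    | succ m ih =>
      have h1 := hrec m
      have h2 : |(p : ℤ)| * |t (m + 1)| = |t m - b * (dig m : ℤ)| := by rw [← abs_mul, h1]
      have hd : (dig m : ℤ) ≤ (p : ℤ) - 1 := by have := hdig_lt m; omega
      have hdnn : (0 : ℤ) ≤ (dig m : ℤ) := Int.natCast_nonneg _
      have h3 : |t m - b * (dig m : ℤ)| ≤ |t m| + |b| * (dig m : ℤ) := by
        calc |t m - b * (dig m : ℤ)| ≤ |t m| + |b * (dig m : ℤ)| := abs_sub _ _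
          _ = |t m| + |b| * (dig m : ℤ) := by
              rw [abs_mul, abs_of_nonneg hdnn]
      have h4 : |b| * (dig m : ℤ) ≤ B * ((p : ℤ) - 1) := by
        apply mul_le_mul hBb hd hdnn hBpos
      have h5 : (p : ℤ) * |t (m + 1)| ≤ (p : ℤ) * B := by
        rw [show (p : ℤ) * |t (m + 1)| = |(p : ℤ)| * |t (m + 1)| by
          rw [abs_of_pos hppos]]
        rw [h2]
        calc |t m - b * (dig m : ℤ)| ≤ |t m| + |b| * (dig m : ℤ) := h3
          _ ≤ B + B * ((p : ℤ) - 1) := add_le_add ih h4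
          _ = (p : ℤ) * B := by ring
      exact le_of_mul_le_mul_left h5 hppos
  -- pigeonhole
  obtain ⟨m, -, m', -, hne, heq⟩ :=
    Set.infinite_univ.exists_ne_map_eq_of_mapsTo
      (f := t) (t := Set.Icc (-B) B)
      (fun m _ => by have := hB m; rw [abs_le] at this; exact ⟨this.1, this.2⟩)
      (Set.finite_Icc _ _)
  -- wlog m < m'
  obtain ⟨N, D, hD, heq⟩ : ∃ N D : ℕ, 1 ≤ D ∧ t N = t (N + D) := by
    rcases hne.lt_or_gt with h | h
    · exact ⟨m, m' - m, by omega, by rw [show m + (m' - m) = m' by omega]; exact heq⟩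
    · exact ⟨m', m - m', by omega, by rw [show m' + (m - m') = m by omega]; exact heq.symm⟩
  refine ⟨N, D, hD, ?_⟩
  -- key divisibility for tails
  have hbu : ∀ (m k : ℕ),
      b * (∑ i ∈ range k, (dig (m + i) : ℤ) * (p : ℤ) ^ i) = t m - (p : ℤ) ^ k * t (m + k) := by
    intro m k
    have h1 := ht m
    have h2 := ht (m + k)
    have h3 : Sz (m + k) = Sz m + ∑ i ∈ range k, (dig (m + i) : ℤ) * (p : ℤ) ^ (m + i) := by
      simp only [hSzdef]; rw [Finset.sum_range_add]
    have h4 : ∑ i ∈ range k, (dig (m + i) : ℤ) * (p : ℤ) ^ (m + i)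
        = (p : ℤ) ^ m * ∑ i ∈ range k, (dig (m + i) : ℤ) * (p : ℤ) ^ i := by
      rw [Finset.mul_sum]
      apply Finset.sum_congr rfl
      intro i _
      rw [pow_add]; ring
    rw [h4] at h3
    apply mul_left_cancel₀ (pow_ne_zero m hppos.ne')
    rw [show (m : ℕ) + k = m + k from rfl] at h2
    have h5 : (p : ℤ) ^ (m + k) = (p : ℤ) ^ m * (p : ℤ) ^ k := pow_add _ _ _
    rw [h5] at h2
    linear_combination h2 - h1 - b * h3
  have htails : ∀ i, dig (N + i) = dig (N + D + i) := by
    apply digits_unique hp1 _ _ (fun i => hdig_lt _) (fun i => hdig_lt _)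
    intro k
    have h1 := hbu N k
    have h2 := hbu (N + D) k
    have hsum : ∑ i ∈ range k, ((dig (N + i) : ℤ) - (dig (N + D + i) : ℤ)) * (p : ℤ) ^ i
        = (∑ i ∈ range k, (dig (N + i) : ℤ) * (p : ℤ) ^ i)
          - ∑ i ∈ range k, (dig (N + D + i) : ℤ) * (p : ℤ) ^ i := by
      rw [← Finset.sum_sub_distrib]
      apply Finset.sum_congr rfl
      intro i _; ring
    have hdiff : b * (∑ i ∈ range k, ((dig (N + i) : ℤ) - (dig (N + D + i) : ℤ)) * (p : ℤ) ^ i)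
        = (p : ℤ) ^ k * (t (N + D + k) - t (N + k)) := by
      rw [hsum]
      have heq' : t N - t (N + D) = 0 := by rw [heq]; ring
      rw [show N + D + k = N + D + k from rfl]
      linear_combination h1 - h2 + heq'
    have hpk : ((p : ℤ) ^ k) ∣ b * (∑ i ∈ range k, ((dig (N + i) : ℤ) - (dig (N + D + i) : ℤ)) * (p : ℤ) ^ i) :=
      ⟨_, hdiff⟩
    have hpprime : Prime (p : ℤ) := Nat.prime_iff_prime_int.mp hp.out
    have hcop : IsCoprime ((p : ℤ) ^ k) b :=
      ((hpprime.coprime_iff_not_dvd).mpr hb).pow_left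
    exact hcop.dvd_of_dvd_mul_left hpk
  intro i hi
  obtain ⟨j, rfl⟩ := Nat.exists_eq_add_of_le hi
  have := htails j
  rw [show N + D + j = N + j + D by omega] at this
  exact this.symm
/-- Lemma 7.3: if `α ∈ ℤ_p` is rational then there are `γ ∈ ℤ_p` rational with `-1 ≤ γ ≤ 0`
(i.e. `(p^d - 1)·γ = -a` for some `d ≥ 1`, `0 ≤ a ≤ p^d - 1`) and an integer `n` with
`α = n + γ`, such that the digit sequences of `α` and `γ` are eventually equal. -/
theorem exists_periodic_tail (p : ℕ) [hp : Fact p.Prime] (α : ℤ_[p])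
    (dig : ℕ → ℕ) (hdig_lt : ∀ i, dig i < p)
    (hdig : ∀ n : ℕ, ((p : ℤ_[p]) ^ n) ∣
      (α - ∑ i ∈ Finset.range n, (dig i : ℤ_[p]) * (p : ℤ_[p]) ^ i))
    (hrat : ∃ b c : ℤ, ¬ ((p : ℤ) ∣ b) ∧ (b : ℤ_[p]) * α = (c : ℤ_[p])) :
    ∃ (γ : ℤ_[p]) (n : ℤ),
      (∃ d a : ℕ, 1 ≤ d ∧ a ≤ p ^ d - 1 ∧ ((p : ℤ_[p]) ^ d - 1) * γ = -(a : ℤ_[p])) ∧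
      α = (n : ℤ_[p]) + γ ∧
      ∃ digγ : ℕ → ℕ, (∀ i, digγ i < p) ∧
        (∀ m : ℕ, ((p : ℤ_[p]) ^ m) ∣
          (γ - ∑ i ∈ Finset.range m, (digγ i : ℤ_[p]) * (p : ℤ_[p]) ^ i)) ∧
        ∃ N : ℕ, ∀ i : ℕ, N ≤ i → dig i = digγ i := by
  obtain ⟨b, c, hb, hbc⟩ := hrat
  have hp1 : 1 < p := hp.out.one_lt
  obtain ⟨N, D, hD, hperiod⟩ := dig_eventually_periodic p α dig hdig_lt hdig b c hb hbc
  -- shift by multiples of the period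
  have hshiftmul : ∀ i k, N ≤ i → dig (i + k * D) = dig i := by
    intro i k hi
    induction k with
    | zero => simp
    | succ k ih =>
      rw [show i + (k + 1) * D = i + k * D + D by ring]
      rw [hperiod _ (by omega), ih]
  set K : ℕ := N * D with hKdef
  have hKN : N ≤ K := by
    calc N = N * 1 := (mul_one N).symm
      _ ≤ N * D := Nat.mul_le_mul_left N hD
  set digγ : ℕ → ℕ := fun i => dig (i + K) with hdigγdef
  have hdigγN : ∀ i, N ≤ i → digγ i = dig i := fun i hi => hshiftmul i N hi
  have hfull : ∀ i, digγ (i + D) = digγ i := by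
    intro i
    show dig (i + D + K) = dig (i + K)
    rw [show i + D + K = i + K + D by ring]
    exact hperiod _ (by omega)
  have hmulfull : ∀ j l, digγ (j * D + l) = digγ l := by
    intro j l
    induction j with
    | zero => simp
    | succ j ih =>
      rw [show (j + 1) * D + l = j * D + l + D by ring, hfull, ih]
  set q : ℤ_[p] := (p : ℤ_[p]) with hqdef
  set a : ℕ := ∑ j ∈ Finset.range D, digγ j * p ^ j with hadef
  have ha_le : a ≤ p ^ D - 1 := by
    have h1 := digit_sum_lt_pow (p := p) (D := D) (Nat.one_le_of_lt hp1) digγ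
      (fun i => hdig_lt _)
    omega
  set T : ℕ → ℤ_[p] := fun m => ∑ i ∈ Finset.range m, (digγ i : ℤ_[p]) * q ^ i with hTdef
  set S : ℕ → ℤ_[p] := fun m => ∑ i ∈ Finset.range m, (dig i : ℤ_[p]) * q ^ i with hSdef
  have hacast : (a : ℤ_[p]) = T D := by
    simp only [hadef, hTdef]; push_cast; rfl
  -- the integer n
  set nz : ℤ := (∑ i ∈ Finset.range K, (dig i : ℤ) * (p : ℤ) ^ i)
    - ∑ i ∈ Finset.range K, (digγ i : ℤ) * (p : ℤ) ^ i with hnzdef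
  have hncast : (nz : ℤ_[p]) = S K - T K := by
    simp only [hnzdef, hSdef, hTdef]; push_cast; rfl
  set γ : ℤ_[p] := α - (nz : ℤ_[p]) with hγdef
  have hST : ∀ m, K ≤ m → S m - T m = S K - T K := by
    intro m hm
    obtain ⟨j, rfl⟩ := Nat.exists_eq_add_of_le hm
    simp only [hSdef, hTdef]
    rw [Finset.sum_range_add, Finset.sum_range_add (fun i => (digγ i : ℤ_[p]) * q ^ i)]
    have he : ∀ i ∈ Finset.range j, (dig (K + i) : ℤ_[p]) * q ^ (K + i)
        = (digγ (K + i) : ℤ_[p]) * q ^ (K + i) := by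
      intro i _
      rw [hdigγN (K + i) (by omega)]
    rw [Finset.sum_congr rfl he]
    ring
  have hγdig : ∀ m, q ^ m ∣ γ - T m := by
    have hbig : ∀ m, K ≤ m → γ - T m = α - S m := by
      intro m hm
      have h1 := hST m hm
      rw [hγdef, hncast]
      linear_combination h1
    intro m
    rcases le_or_gt K m with hm | hm
    · rw [hbig m hm]
      exact hdig m
    · have h1 : q ^ m ∣ γ - T K :=
        (pow_dvd_pow q hm.le).trans (by rw [hbig K le_rfl]; exact hdig K)
      have h2 : q ^ m ∣ T K - T m := partial_sum_dvd (fun i => (digγ i : ℤ_[p])) hm.le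
      have h3 : γ - T m = (γ - T K) + (T K - T m) := by ring
      rw [h3]
      exact dvd_add h1 h2
  -- the rationality identity for γ
  have hTk : ∀ k : ℕ, T (k * D) = (a : ℤ_[p]) * ∑ j ∈ Finset.range k, (q ^ D) ^ j := by
    intro k
    induction k with
    | zero => simp [hTdef]
    | succ k ih =>
      have h1 : (k + 1) * D = k * D + D := by ring
      simp only [hTdef] at ih ⊢
      rw [h1, Finset.sum_range_add]
      have h2 : ∀ l ∈ Finset.range D, (digγ (k * D + l) : ℤ_[p]) * q ^ (k * D + l)
          = (q ^ D) ^ k * ((digγ l : ℤ_[p]) * q ^ l) := by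
        intro l _
        rw [hmulfull k l, pow_add, ← pow_mul, mul_comm D k]
        ring
      have ha2 := hacast
      simp only [hTdef] at ha2
      rw [Finset.sum_congr rfl h2, ← Finset.mul_sum, ih, ← ha2,
        Finset.sum_range_succ]
      ring
  have hX : (q ^ D - 1) * γ + (a : ℤ_[p]) = 0 := by
    apply padic_eq_zero_of_forall_dvd
    intro m
    have hmd : m ≤ m * D := by
      calc m = m * 1 := (mul_one m).symm
        _ ≤ m * D := Nat.mul_le_mul_left m hD
    refine (pow_dvd_pow q hmd).trans ?_
    have h1 : (q ^ D) ^ m ∣ γ - T (m * D) := by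
      rw [← pow_mul, mul_comm D m]
      exact hγdig (m * D)
    have h2 := h1.mul_left (q ^ D - 1)
    have hg := mul_geom_sum (q ^ D) m
    have h3 : (q ^ D - 1) * (γ - T (m * D))
        = ((q ^ D - 1) * γ + (a : ℤ_[p])) - (a : ℤ_[p]) * (q ^ D) ^ m := by
      rw [hTk m]
      linear_combination (-(a : ℤ_[p])) * hg
    rw [h3] at h2
    have h4 : (q ^ D) ^ m ∣ (a : ℤ_[p]) * (q ^ D) ^ m := Dvd.intro_left _ rfl
    have h5 := dvd_add h2 h4
    have h6 : ((q ^ D - 1) * γ + (a : ℤ_[p])) - (a : ℤ_[p]) * (q ^ D) ^ m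
        + (a : ℤ_[p]) * (q ^ D) ^ m = (q ^ D - 1) * γ + (a : ℤ_[p]) := by ring
    rw [h6] at h5
    rw [show q ^ (m * D) = (q ^ D) ^ m by rw [← pow_mul, mul_comm]]
    exact h5
  refine ⟨γ, nz, ⟨D, a, hD, ha_le, by linear_combination hX⟩, by rw [hγdef]; ring,
    digγ, fun i => hdig_lt _, hγdig, ⟨N, fun i hi => (hdigγN i hi).symm⟩⟩
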